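/- arXiv:1510.08481 — 6 statements merged into one kernel-verified Lean document; each statement's English description precedes it below -/
import Mathlib

section
/- Every semi-magic square (an n×n matrix of non-negative integers all of whose rows sum to the same value s and all of whose columns sum to s) can be written as a sum of permutation matrices. -/
/-- The permutation matrix of `σ`: entry `(i,j)` is `1` if `j = σ i` and `0` otherwise. -/
def permMatrix' {n : ℕ} (σ : Equiv.Perm (Fin n)) : Matrix (Fin n) (Fin n) ℕ :=
  Matrix.of fun i j => if j = σ i then 1 else 0

open Finset in
lemma exists_perm_le {n : ℕ} (M : Matrix (Fin n) (Fin n) ℕ) (s : ℕ) (hs : 0 < s)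
    (hrow : ∀ i, ∑ j, M i j = s) (hcol : ∀ j, ∑ i, M i j = s) :
    ∃ σ : Equiv.Perm (Fin n), ∀ i, 0 < M i (σ i) := by
  classical
  let f (i : Fin n) : Finset (Fin n) := {j | M i j ≠ 0}
  have hf : ∀ A : Finset (Fin n), #A ≤ #(A.biUnion f) := by
    intro A
    have h1 : ∀ i, ∑ j ∈ f i, M i j = s := by
      intro i
      rw [← hrow i]
      exact sum_subset (filter_subset _ _) (by simp [f])
    have h2 : #A * s = ∑ i ∈ A, ∑ j ∈ f i, M i j := by simp [h1, mul_comm]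
    have h3 : ∑ i ∈ A, ∑ j ∈ f i, M i j ≤ ∑ i ∈ A, ∑ j ∈ A.biUnion f, M i j := by
      refine sum_le_sum fun i hi => ?_
      exact sum_le_sum_of_subset (subset_biUnion_of_mem f hi)
    have h4 : ∑ i ∈ A, ∑ j ∈ A.biUnion f, M i j ≤ ∑ i, ∑ j ∈ A.biUnion f, M i j :=
      sum_le_sum_of_subset (subset_univ A)
    have h5 : ∑ i, ∑ j ∈ A.biUnion f, M i j = #(A.biUnion f) * s := by
      refine sum_comm.trans ?_
      simp [hcol, mul_comm]
    have := (h2 ▸ h3.trans (h4.trans_eq h5))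
    exact Nat.le_of_mul_le_mul_right this hs
  obtain ⟨g, hg, hg'⟩ := (all_card_le_biUnion_card_iff_exists_injective f).1 hf
  rw [Finite.injective_iff_bijective] at hg
  refine ⟨Equiv.ofBijective g hg, fun i => ?_⟩
  have := hg' i
  simp only [f, mem_filter, mem_univ, true_and] at this
  exact Nat.pos_of_ne_zero this

/-- Every semi-magic square (an `n × n` matrix of non-negative integers all of whose rows
sum to the same value `s` and all of whose columns sum to `s`) is a sum of permutation
matrices. -/
theorem semiMagic_eq_sum_permMatrices {n : ℕ} (M : Matrix (Fin n) (Fin n) ℕ) (s : ℕ)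
    (hrow : ∀ i, ∑ j, M i j = s) (hcol : ∀ j, ∑ i, M i j = s) :
    ∃ l : List (Equiv.Perm (Fin n)), M = (l.map permMatrix').sum := by
  classical
  rcases Nat.eq_zero_or_pos n with rfl | hn
  · exact ⟨[], by ext i; exact absurd i.2 (by omega)⟩
  induction s generalizing M with
  | zero =>
    refine ⟨[], ?_⟩
    ext i j
    simp only [List.map_nil, List.sum_nil, Matrix.zero_apply]
    have h0 : ∀ j ∈ Finset.univ, M i j = 0 := Finset.sum_eq_zero_iff.mp (hrow i)
    exact h0 j (Finset.mem_univ j)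
  | succ s ih =>
    obtain ⟨σ, hσ⟩ := exists_perm_le M (s+1) (Nat.succ_pos s) hrow hcol
    set P := permMatrix' σ with hP
    have hle : ∀ i j, P i j ≤ M i j := by
      intro i j
      by_cases h : j = σ i
      · subst h; simpa [P, permMatrix'] using Nat.one_le_iff_ne_zero.mpr (hσ i).ne'
      · simp [P, permMatrix', h]
    set N : Matrix (Fin n) (Fin n) ℕ := fun i j => M i j - P i j with hN
    have hMN : ∀ i j, M i j = N i j + P i j := fun i j =>
      (Nat.sub_add_cancel (hle i j)).symm
    have hProw : ∀ i, ∑ j, P i j = 1 := by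
      intro i; simp [P, permMatrix']
    have hPcol : ∀ j, ∑ i, P i j = 1 := by
      intro j
      rw [Finset.sum_eq_single (σ.symm j)]
      · simp [P, permMatrix']
      · intro i _ hi
        simp only [P, permMatrix', Matrix.of_apply, ite_eq_right_iff]
        intro h; exact absurd (by rw [h, Equiv.symm_apply_apply]) hi
      · simp
    have hNrow : ∀ i, ∑ j, N i j = s := by
      intro i
      have := hrow i
      rw [Finset.sum_congr rfl (fun j _ => hMN i j), Finset.sum_add_distrib, hProw i] at this
      omega
    have hNcol : ∀ j, ∑ i, N i j = s := by
      intro j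
      have := hcol j
      rw [Finset.sum_congr rfl (fun i _ => hMN i j), Finset.sum_add_distrib, hPcol j] at this
      omega
    obtain ⟨l, hl⟩ := ih N hNrow hNcol
    refine ⟨σ :: l, ?_⟩
    ext i j
    simp only [List.map_cons, List.sum_cons, Matrix.add_apply, ← hl]
    rw [hMN i j, ← hP]
    omega
end

section
/- The ring of polynomials in variables x_{i,j} (1 ≤ i,j ≤ n) over a field F that are invariant under the substitution x_{i,j} ↦ (λᵢ/μⱼ)·x_{i,j} for all λ, μ ∈ Fⁿ with ∏λᵢ = ∏μⱼ = 1 is generated as an F-algebra by the monomials Ψ⁰_σ := sign(σ)·∏_{i=1}^n x_{σ(i),i} for σ ranging over the symmetric group Sₙ. -/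
open MvPolynomial

/-- The canonical generator `Ψ⁰_σ = sign σ · ∏ᵢ x_{σ(i), i}`. -/
noncomputable def Psi0 {F : Type*} [Field F] {n : ℕ} (σ : Equiv.Perm (Fin n)) :
    MvPolynomial (Fin n × Fin n) F :=
  C ((Equiv.Perm.sign σ : ℤ) : F) * ∏ i, X (σ i, i)

section auxlemmas
variable {F : Type*} [Field F] {n : ℕ}

lemma aeval_scale_monomial (s : Fin n × Fin n → F) (e : (Fin n × Fin n) →₀ ℕ) (a : F) :
    aeval (fun q : Fin n × Fin n => C (s q) * X q) (monomial e a)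
      = C (∏ q, s q ^ e q) * monomial e a := by
  have h1 : (e.prod fun q k => ((C (s q) * X q : MvPolynomial (Fin n × Fin n) F)) ^ k)
      = C (∏ q, s q ^ e q) * e.prod fun q k => (X q : MvPolynomial (Fin n × Fin n) F) ^ k := by
    rw [Finsupp.prod, Finsupp.prod]
    simp_rw [mul_pow, ← C_pow]
    rw [Finset.prod_mul_distrib, ← map_prod]
    congr 2
    exact Finset.prod_subset (Finset.subset_univ _) (fun q _ hq => by
      rw [Finsupp.notMem_support_iff.mp hq, pow_zero])
  rw [aeval_monomial, h1, monomial_eq, algebraMap_eq]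
  ring

lemma coeff_aeval_scale (s : Fin n × Fin n → F) (P : MvPolynomial (Fin n × Fin n) F)
    (d : (Fin n × Fin n) →₀ ℕ) :
    coeff d (aeval (fun q : Fin n × Fin n => C (s q) * X q) P)
      = (∏ q, s q ^ d q) * coeff d P := by
  conv_lhs => rw [P.as_sum]
  rw [map_sum]
  simp_rw [aeval_scale_monomial]
  rw [MvPolynomial.coeff_sum]
  simp_rw [coeff_C_mul, coeff_monomial]
  rw [Finset.sum_eq_single d (fun e _ hne => by simp [hne])
    (fun hd => by simp [MvPolynomial.notMem_support_iff.mp hd])]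
  simp

lemma prod_pow_test [CharZero F] (g : Fin n → ℕ)
    (h : ∀ f : Fin n → F, (∀ i, f i ≠ 0) → ∏ i, f i = 1 → ∏ i, f i ^ g i = 1)
    (i0 i1 : Fin n) : g i0 = g i1 := by
  rcases eq_or_ne i0 i1 with rfl | hne
  · rfl
  classical
  set f : Fin n → F := fun i => if i = i0 then 2 else if i = i1 then 2⁻¹ else 1 with hf
  have key : ∀ u : Fin n → F, (∀ i, i ≠ i0 → i ≠ i1 → u i = 1) →
      ∏ i, u i = u i0 * u i1 := by
    intro u hu
    rw [← Finset.prod_subset (Finset.subset_univ ({i0, i1} : Finset (Fin n)))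
      (fun x _ hx => hu x (fun h => hx (by simp [h])) (fun h => hx (by simp [h]))),
      Finset.prod_pair hne]
  have hnz : ∀ i, f i ≠ 0 := by
    intro i; simp only [hf]; split_ifs <;> norm_num
  have hf0 : f i0 = 2 := if_pos rfl
  have hf1 : f i1 = 2⁻¹ := by simp only [hf]; rw [if_neg hne.symm]; simp
  have hp1 : ∏ i, f i = 1 := by
    rw [key f (fun i h0 h1 => by simp only [hf]; rw [if_neg h0, if_neg h1]), hf0, hf1]
    norm_num
  have hpow := h f hnz hp1
  rw [key (fun i => f i ^ g i) (fun i h0 h1 => by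
      simp only [hf]; rw [if_neg h0, if_neg h1, one_pow]), hf0, hf1, inv_pow] at hpow
  have h2 : (2 : F) ^ g i0 = 2 ^ g i1 :=
    (mul_inv_eq_one₀ (pow_ne_zero _ two_ne_zero)).mp hpow
  have h3 : ((2 ^ g i0 : ℕ) : F) = ((2 ^ g i1 : ℕ) : F) := by push_cast; exact h2
  exact Nat.pow_right_injective le_rfl (Nat.cast_injective h3)

lemma prod_split (lam mu : Fin n → F) (d : (Fin n × Fin n) →₀ ℕ) :
    ∏ q : Fin n × Fin n, (lam q.1 / mu q.2) ^ d q
      = (∏ i, lam i ^ ∑ j, d (i, j)) / ∏ j, mu j ^ ∑ i, d (i, j) := by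
  simp_rw [div_pow]
  rw [Finset.prod_div_distrib]
  congr 1
  · rw [Fintype.prod_prod_type]
    simp_rw [Finset.prod_pow_eq_pow_sum]
  · rw [Fintype.prod_prod_type, Finset.prod_comm]
    simp_rw [Finset.prod_pow_eq_pow_sum]

lemma prod_X_eq {α σ : Type*} [DecidableEq σ] (s : Finset α) (g : α → σ) :
    (∏ i ∈ s, X (g i) : MvPolynomial σ F)
      = monomial (∑ i ∈ s, Finsupp.single (g i) 1) 1 := by
  classical
  induction s using Finset.induction with
  | empty => simp
  | insert _ _ h ih =>
    rw [Finset.prod_insert h, Finset.sum_insert h, ih, X, monomial_mul, mul_one]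

lemma prod_X_perm_mem (σ : Equiv.Perm (Fin n)) :
    (∏ i, X (σ i, i) : MvPolynomial (Fin n × Fin n) F)
      ∈ Algebra.adjoin F (Set.range (Psi0 (F := F) (n := n))) := by
  have hs : ((Equiv.Perm.sign σ : ℤ) : F) * ((Equiv.Perm.sign σ : ℤ) : F) = 1 := by
    rw [← Int.cast_mul, ← Units.val_mul, Int.units_mul_self, Units.val_one, Int.cast_one]
  have h1 : (∏ i, X (σ i, i) : MvPolynomial (Fin n × Fin n) F)
      = C ((Equiv.Perm.sign σ : ℤ) : F) * Psi0 σ := by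
    rw [Psi0, ← mul_assoc, ← C_mul, hs, C_1, one_mul]
  rw [h1]
  refine Subalgebra.mul_mem _ ?_ (Algebra.subset_adjoin ⟨σ, rfl⟩)
  rw [← algebraMap_eq]
  exact Subalgebra.algebraMap_mem _ _

lemma birkhoff : ∀ (r : ℕ) (d : (Fin n × Fin n) →₀ ℕ),
    (∀ i, ∑ j, d (i, j) = r) → (∀ j, ∑ i, d (i, j) = r) →
    (monomial d 1 : MvPolynomial (Fin n × Fin n) F) ∈
      Algebra.adjoin F (Set.range (Psi0 (F := F) (n := n))) := by
  intro r
  induction r with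
  | zero =>
    intro d hr _
    have hd : d = 0 := by
      ext q
      have h0 := hr q.1
      rw [Finset.sum_eq_zero_iff] at h0
      simpa using h0 q.2 (Finset.mem_univ _)
    subst hd
    simpa using Subalgebra.one_mem _
  | succ r ih =>
    intro d hr hc
    classical
    set t : Fin n → Finset (Fin n) := fun j => Finset.univ.filter (fun i => 0 < d (i, j))
      with ht
    have hall : ∀ s : Finset (Fin n), s.card ≤ (s.biUnion t).card := by
      intro s
      have key : (r+1) * s.card ≤ (r+1) * (s.biUnion t).card := by
        calc (r+1) * s.card = ∑ _j ∈ s, (r+1) := by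
              rw [Finset.sum_const, smul_eq_mul, mul_comm]
          _ = ∑ j ∈ s, ∑ i, d (i, j) := by
              exact Finset.sum_congr rfl fun j _ => (hc j).symm
          _ = ∑ j ∈ s, ∑ i ∈ s.biUnion t, d (i, j) := by
              refine Finset.sum_congr rfl fun j hj =>
                (Finset.sum_subset (Finset.subset_univ _) fun i _ hi => ?_).symm
              by_contra hne
              exact hi (Finset.mem_biUnion.mpr ⟨j, hj, Finset.mem_filter.mpr
                ⟨Finset.mem_univ _, Nat.pos_of_ne_zero hne⟩⟩)
          _ = ∑ i ∈ s.biUnion t, ∑ j ∈ s, d (i, j) := Finset.sum_comm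
          _ ≤ ∑ i ∈ s.biUnion t, ∑ j, d (i, j) := Finset.sum_le_sum fun i _ =>
              Finset.sum_le_sum_of_subset (Finset.subset_univ _)
          _ = ∑ _i ∈ s.biUnion t, (r+1) := Finset.sum_congr rfl fun i _ => hr i
          _ = (r+1) * (s.biUnion t).card := by
              rw [Finset.sum_const, smul_eq_mul, mul_comm]
      exact Nat.le_of_mul_le_mul_left key (Nat.succ_pos r)
    obtain ⟨f, hfinj, hft⟩ := (Finset.all_card_le_biUnion_card_iff_exists_injective t).mp hall
    let σ : Equiv.Perm (Fin n) := Equiv.ofBijective f (Finite.injective_iff_bijective.mp hfinj)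
    have hσ : ∀ j, 0 < d (σ j, j) := by
      intro j
      have := hft j
      rw [ht] at this
      simpa [σ] using (Finset.mem_filter.mp this).2
    set pm : (Fin n × Fin n) →₀ ℕ := ∑ j, Finsupp.single (σ j, j) 1 with hpmdef
    have hpm : ∀ a b, pm (a, b) = if a = σ b then 1 else 0 := by
      intro a b
      rw [hpmdef, Finsupp.finset_sum_apply]
      rw [Finset.sum_eq_single b]
      · rw [Finsupp.single_apply]
        simp [Prod.ext_iff, eq_comm]
      · intro j _ hj
        rw [Finsupp.single_apply, if_neg (by simp [Prod.ext_iff, hj])]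
      · intro hb; exact absurd (Finset.mem_univ b) hb
    have hle : pm ≤ d := by
      rw [Finsupp.le_def]
      rintro ⟨a, b⟩
      rw [hpm a b]
      split_ifs with hab
      · subst hab; exact hσ b
      · exact Nat.zero_le _
    set d' : (Fin n × Fin n) →₀ ℕ := d - pm with hd'def
    have hadd : d' + pm = d := tsub_add_cancel_of_le hle
    have happly : ∀ a b, d' (a, b) + pm (a, b) = d (a, b) := by
      intro a b
      rw [← Finsupp.add_apply, hadd]
    have hrowpm : ∀ i, ∑ j, pm (i, j) = 1 := by
      intro i
      have he : ∑ j, pm (i, j) = ∑ k, if i = k then 1 else 0 :=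
        Fintype.sum_equiv σ _ _ (fun j => hpm i j)
      rw [he]
      simp
    have hcolpm : ∀ j, ∑ i, pm (i, j) = 1 := by
      intro j
      rw [Finset.sum_congr rfl (fun i _ => hpm i j)]
      simp
    have hr' : ∀ i, ∑ j, d' (i, j) = r := by
      intro i
      have h1 : (∑ j, d' (i, j)) + (∑ j, pm (i, j)) = ∑ j, d (i, j) := by
        rw [← Finset.sum_add_distrib]
        exact Finset.sum_congr rfl fun j _ => happly i j
      rw [hrowpm i, hr i] at h1
      omega
    have hc' : ∀ j, ∑ i, d' (i, j) = r := by
      intro j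
      have h1 : (∑ i, d' (i, j)) + (∑ i, pm (i, j)) = ∑ i, d (i, j) := by
        rw [← Finset.sum_add_distrib]
        exact Finset.sum_congr rfl fun i _ => happly i j
      rw [hcolpm j, hc j] at h1
      omega
    have hmono : (monomial d 1 : MvPolynomial (Fin n × Fin n) F)
        = monomial d' 1 * ∏ i, X (σ i, i) := by
      rw [prod_X_eq, monomial_mul, ← hpmdef, hadd, mul_one]
    rw [hmono]
    exact Subalgebra.mul_mem _ (ih d' hr' hc') (prod_X_perm_mem σ)

end auxlemmas

/-- A polynomial in the variables `x_{i,j}` over a field `F` of characteristic zero is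
invariant under all substitutions `x_{i,j} ↦ (λᵢ/μⱼ)·x_{i,j}` with `∏λᵢ = ∏μⱼ = 1` if and
only if it lies in the `F`-subalgebra generated by the monomials
`Ψ⁰_σ = sign σ · ∏ᵢ x_{σ(i),i}`, `σ ∈ Sₙ`. -/
theorem invariant_iff_mem_adjoin_Psi0 {F : Type*} [Field F] [CharZero F] {n : ℕ}
    (P : MvPolynomial (Fin n × Fin n) F) :
    (∀ lam mu : Fin n → F, (∀ i, lam i ≠ 0) → (∀ j, mu j ≠ 0) →
        ∏ i, lam i = 1 → ∏ j, mu j = 1 →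
        aeval (fun q : Fin n × Fin n => C (lam q.1 / mu q.2) * X q) P = P)
      ↔ P ∈ Algebra.adjoin F (Set.range (Psi0 (F := F) (n := n))) := by
  constructor
  · intro h
    have key : ∀ d ∈ P.support, ∀ lam mu : Fin n → F, (∀ i, lam i ≠ 0) → (∀ j, mu j ≠ 0) →
        ∏ i, lam i = 1 → ∏ j, mu j = 1 →
        ∏ q : Fin n × Fin n, (lam q.1 / mu q.2) ^ d q = 1 := by
      intro d hd lam mu h1 h2 h3 h4
      have hc := congrArg (coeff d) (h lam mu h1 h2 h3 h4)
      rw [coeff_aeval_scale] at hc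
      exact mul_right_cancel₀ (mem_support_iff.mp hd)
        (hc.trans (one_mul (coeff d P)).symm)
    rw [P.as_sum]
    refine Subalgebra.sum_mem _ fun d hd => ?_
    have hCm : (monomial d (coeff d P) : MvPolynomial (Fin n × Fin n) F)
        = C (coeff d P) * monomial d 1 := by
      rw [C_mul_monomial, mul_one]
    rw [hCm]
    refine Subalgebra.mul_mem _ (by rw [← algebraMap_eq]; exact Subalgebra.algebraMap_mem _ _) ?_
    have hrow : ∀ i i', (∑ j, d (i, j)) = ∑ j, d (i', j) := by
      intro i i'
      refine prod_pow_test (F := F) (fun i => ∑ j, d (i, j)) (fun f hf h1 => ?_) i i'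
      have hk := key d hd f (fun _ => 1) hf (fun _ => one_ne_zero) h1 (by simp)
      rw [prod_split f (fun _ => 1) d] at hk
      simpa using hk
    have hcol : ∀ j j', (∑ i, d (i, j)) = ∑ i, d (i, j') := by
      intro j j'
      refine prod_pow_test (F := F) (fun j => ∑ i, d (i, j)) (fun f hf h1 => ?_) j j'
      have hfi : ∀ j, (f j)⁻¹ ≠ 0 := fun j => inv_ne_zero (hf j)
      have hp : ∏ j, (f j)⁻¹ = 1 := by rw [Finset.prod_inv_distrib, h1, inv_one]
      have hk := key d hd (fun _ => 1) (fun j => (f j)⁻¹)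
        (fun _ => one_ne_zero) hfi (by simp) hp
      rw [prod_split (fun _ => 1) (fun j => (f j)⁻¹) d] at hk
      simp only [one_pow, Finset.prod_const_one, inv_pow, ← Finset.prod_inv_distrib,
        inv_inv, one_div, inv_eq_one] at hk
      exact hk
    rcases Nat.eq_zero_or_pos n with hn | hn
    · subst hn
      exact birkhoff 0 d (fun i => i.elim0) (fun j => j.elim0)
    · have i0 : Fin n := ⟨0, hn⟩
      refine birkhoff (∑ j, d (i0, j)) d (fun i => hrow i i0) (fun j => ?_)
      have hA : ∑ j' : Fin n, ∑ i, d (i, j') = n * ∑ i, d (i, j) := by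
        rw [Finset.sum_congr rfl (fun j' _ => hcol j' j), Finset.sum_const,
          Finset.card_univ, Fintype.card_fin, smul_eq_mul]
      have hB : ∑ i : Fin n, ∑ j', d (i, j') = n * ∑ j', d (i0, j') := by
        rw [Finset.sum_congr rfl (fun i _ => hrow i i0), Finset.sum_const,
          Finset.card_univ, Fintype.card_fin, smul_eq_mul]
      exact Nat.eq_of_mul_eq_mul_left hn (hA.symm.trans (Finset.sum_comm.trans hB))
  · intro hP lam mu h1 h2 h3 h4
    induction hP using Algebra.adjoin_induction with
    | mem x hx =>
      obtain ⟨σ, rfl⟩ := hx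
      rw [Psi0, map_mul, aeval_C, map_prod]
      simp only [aeval_X]
      rw [Finset.prod_mul_distrib, ← map_prod C (fun i => lam (σ i) / mu i)]
      have hprod : ∏ i, (lam (σ i) / mu i) = 1 := by
        rw [Finset.prod_div_distrib, Equiv.prod_comp σ lam, h3, h4, div_one]
      rw [hprod, C_1, one_mul, algebraMap_eq]
    | algebraMap r => simp [algebraMap_eq]
    | add x y hx hy ihx ihy => rw [map_add, ihx, ihy]
    | mul x y hx hy ihx ihy => rw [map_mul, ihx, ihy]
end

section
/- Let E be an étale algebra of degree n over a field L where E splits (E ≅ Lⁿ), with complete set of primitive orthogonal idempotents e₁,…,eₙ. Let b₁,…,bₙ be an L-basis of E and let b̌₁,…,b̌ₙ be its dual basis with respect to the trace form (Tr(b̌ᵢ bⱼ) = δ_{ij}). Then for any σ ∈ Sₙ (acting by permuting the idempotents) and any g in the ambient split central simple algebra, Nrd(Σᵢ (σ·b̌ᵢ)·g·bᵢ) = Nrd(Σᵢ (σ·eᵢ)·g·eᵢ), i.e., the canonical generator Ψ_σ can be computed using any basis and its dual basis. -/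
open Matrix

/-- In the split model `B = Mₙ(L)` with `E` the diagonal étale subalgebra, whose complete
set of primitive orthogonal idempotents is `eᵢ = E_{ii}` (orthonormal for the reduced
trace form), suppose `b i = diagonal (v i)` is an `L`-basis of `E` and
`b̌ i = diagonal (vdual i)` is its dual basis for the trace form, i.e.
`Trd(b̌ᵢ bⱼ) = Σₖ vdual i k · v j k = δᵢⱼ`.  A Weyl group element `σ ∈ Sₙ` acts on `E` by
permuting the idempotents, `σ·diagonal w = diagonal (w ∘ σ⁻¹)`.  Then for every `g`,
`Nrd(Σᵢ (σ·b̌ᵢ)·g·bᵢ) = Nrd(Σᵢ (σ·eᵢ)·g·eᵢ)`: the canonical generator `Ψ_σ` can be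
computed using any basis and its dual basis. -/
theorem canonical_generator_via_dual_basis {L : Type*} [Field L] {n : ℕ}
    (v vdual : Fin n → Fin n → L)
    (hdual : ∀ i j, ∑ k, vdual i k * v j k = if i = j then (1 : L) else 0)
    (g : Matrix (Fin n) (Fin n) L) (σ : Equiv.Perm (Fin n)) :
    (∑ i, Matrix.diagonal (fun k => vdual i (σ⁻¹ k)) * g * Matrix.diagonal (v i)).det
      = (∑ i, Matrix.single (σ i) (σ i) (1 : L) * g
          * Matrix.single i i (1 : L)).det := by
  -- The dual relation says `(of vdual) * (of v)ᵀ = 1`; transpose it.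
  have h1 : (Matrix.of vdual) * (Matrix.of v)ᵀ = 1 := by
    ext i j
    simpa [Matrix.mul_apply, Matrix.one_apply] using hdual i j
  have h2 : (Matrix.of v)ᵀ * (Matrix.of vdual) = 1 := mul_eq_one_comm.mp h1
  have hsum : ∀ k m : Fin n, ∑ i, vdual i m * v i k = if k = m then (1 : L) else 0 := by
    intro k m
    have := congrFun (congrFun h2 k) m
    simpa [Matrix.mul_apply, Matrix.one_apply, mul_comm] using this
  congr 1
  ext a b
  simp only [Matrix.sum_apply, Matrix.mul_apply, Matrix.diagonal_apply,
    Matrix.single, Matrix.of_apply]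
  have L1 : ∀ i : Fin n, (∑ j, (∑ k, (if a = k then vdual i (σ⁻¹ a) else 0) * g k j)
      * (if j = b then v i j else 0)) = vdual i (σ⁻¹ a) * g a b * v i b := by
    intro i
    rw [Finset.sum_eq_single b]
    · rw [Finset.sum_eq_single a] <;> simp +contextual [eq_comm]
    · intro j _ hj; simp [hj]
    · simp
  have R1 : ∀ i : Fin n, (∑ j, (∑ k, (if σ i = a ∧ σ i = k then (1:L) else 0) * g k j)
      * (if i = j ∧ i = b then (1:L) else 0)) = if σ i = a ∧ i = b then g a b else 0 := by
    intro i
    rw [Finset.sum_eq_single b]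
    · rw [Finset.sum_eq_single a]
      · by_cases h1 : σ i = a <;> by_cases h2 : i = b <;> simp [h1, h2]
      · intro k _ hk
        by_cases h1 : σ i = a
        · simp [h1, Ne.symm hk]
        · simp [h1]
      · simp
    · intro j _ hj
      rw [if_neg (fun (h : i = j ∧ i = b) => hj (h.1 ▸ h.2)), mul_zero]
    · simp
  rw [Finset.sum_congr rfl fun i _ => L1 i, Finset.sum_congr rfl fun i _ => R1 i]
  have lhs : ∑ i, vdual i (σ⁻¹ a) * g a b * v i b
      = (∑ i, vdual i (σ⁻¹ a) * v i b) * g a b := by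
    rw [Finset.sum_mul]; exact Finset.sum_congr rfl fun i _ => by ring
  have rhs : (∑ i, if σ i = a ∧ i = b then g a b else 0)
      = if σ b = a then g a b else 0 := by
    rw [Finset.sum_eq_single b]
    · simp
    · intro i _ hi; simp [hi]
    · simp
  rw [lhs, rhs, hsum b (σ⁻¹ a)]
  have heq : (b = σ⁻¹ a) ↔ (σ b = a) := by
    constructor
    · intro h; rw [h]; simp
    · intro h; rw [← h]; simp
  by_cases h : σ b = a
  · rw [if_pos (heq.mpr h), if_pos h, one_mul]
  · rw [if_neg (fun hh => h (heq.mp hh)), if_neg h, zero_mul]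
end

section
/- Assume Gal(L/F) is 2-transitive as a subgroup of the Weyl group W ≅ Sₙ. If g ∈ G(F) and there exists a fixed-point-free σ ∈ W with Ψ_σ(g) = 0, then Ψ_τ(g) = 0 for every τ ≠ id and Ψ_id(g) = 1; consequently the image of g in the double quotient T\\G/T equals the image of the identity. -/
open scoped TensorProduct

lemma aux_stdBasis_sandwich {L : Type*} [Field L] {n : ℕ} (a b : Fin n)
    (N : Matrix (Fin n) (Fin n) L) :
    Matrix.single a a 1 * N * Matrix.single b b 1
      = N a b • Matrix.single a b 1 := by
  ext c d
  simp [Matrix.mul_apply, Matrix.single, Finset.sum_ite_eq, ite_and]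
  aesop

lemma aux_perm_diag {L : Type*} [Field L] {n : ℕ} (π : Equiv.Perm (Fin n))
    (M : Matrix (Fin n) (Fin n) L) :
    (∑ i, M (π i) i • Matrix.single (π i) i (1:L))
      = (π⁻¹).permMatrix L * Matrix.diagonal (fun i => M (π i) i) := by
  ext c d
  rw [Matrix.sum_apply, Matrix.mul_apply]
  have hL : ∀ i : Fin n, (M (π i) i • Matrix.single (π i) i (1:L)) c d
      = if i = d ∧ c = π i then M (π i) i else 0 := by
    intro i
    simp [Matrix.single, ite_and, and_comm, eq_comm]
  have hR : ∀ k : Fin n, (π⁻¹).permMatrix L c k * Matrix.diagonal (fun i => M (π i) i) k d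
      = if k = d ∧ c = π k then M (π k) k else 0 := by
    intro k
    simp [Equiv.Perm.permMatrix, Equiv.toPEquiv, PEquiv.toMatrix, Matrix.diagonal,
      Equiv.eq_symm_apply, ite_and]
    simp [Equiv.symm_apply_eq]
  simp only [hL, hR]

lemma aux_det_perm_pattern {L : Type*} [Field L] {n : ℕ} (π : Equiv.Perm (Fin n))
    (M : Matrix (Fin n) (Fin n) L) :
    (∑ i, M (π i) i • Matrix.single (π i) i (1:L)).det
      = ((Equiv.Perm.sign π : ℤ) : L) * ∏ i, M (π i) i := by
  rw [aux_perm_diag, Matrix.det_mul, Matrix.det_permutation, Matrix.det_diagonal]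
  simp

/-- Assume `Gal(L/F)` is 2-transitive as a subgroup (via the injection `η`) of the Weyl
group `W ≅ Sₙ`.  Work in the split model: `φ : L ⊗_F B ≃ Mₙ(L)` carries the idempotents
`eᵢ` of the split maximal commutative subalgebra associated to `T` to the standard
diagonal idempotents, the Galois action permutes the `eᵢ` via `η`, and the reduced norm
`Nrd = det ∘ φ` is Galois equivariant.  If `g ∈ G(F)` and there is a fixed-point-free
`σ ∈ W` with `Ψ_σ(g) = 0`, then `Ψ_τ(g) = 0` for every `τ ≠ id` and `Ψ_id(g) = 1`;
consequently all the canonical generators take the same value at `g` as at the identity,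
i.e. the image of `g` in the double quotient `T\G/T` equals the image of the identity. -/
theorem canonical_generators_trivial_of_two_transitive {F L B : Type*} [Field F] [Field L]
    [Algebra F L] [Ring B] [Algebra F B] {n : ℕ}
    (e : Fin n → L ⊗[F] B)
    (φ : (L ⊗[F] B) ≃ₐ[L] Matrix (Fin n) (Fin n) L)
    (he : ∀ i, φ (e i) = Matrix.single i i (1 : L))
    (η : (L ≃ₐ[F] L) →* Equiv.Perm (Fin n))
    (hequiv : ∀ (τ : L ≃ₐ[F] L) (i : Fin n),
      Algebra.TensorProduct.map τ.toAlgHom (AlgHom.id F B) (e i) = e (η τ i))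
    (hNrdGal : ∀ (τ : L ≃ₐ[F] L) (x : L ⊗[F] B),
      (φ (Algebra.TensorProduct.map τ.toAlgHom (AlgHom.id F B) x)).det = τ ((φ x).det))
    (h2trans : ∀ a b c d : Fin n, a ≠ b → c ≠ d → ∃ τ : L ≃ₐ[F] L, η τ a = c ∧ η τ b = d)
    (g : B) (hg : (φ ((1 : L) ⊗ₜ[F] g)).det ≠ 0)
    (σ : Equiv.Perm (Fin n)) (hσfix : ∀ i, σ i ≠ i)
    (hzero : (φ (∑ i, e (σ i) * ((1 : L) ⊗ₜ[F] g) * e i)).det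
        * ((φ ((1 : L) ⊗ₜ[F] g)).det)⁻¹ = 0) :
    (∀ τ : Equiv.Perm (Fin n), τ ≠ 1 →
      (φ (∑ i, e (τ i) * ((1 : L) ⊗ₜ[F] g) * e i)).det
        * ((φ ((1 : L) ⊗ₜ[F] g)).det)⁻¹ = 0) ∧
    (φ (∑ i, e i * ((1 : L) ⊗ₜ[F] g) * e i)).det * ((φ ((1 : L) ⊗ₜ[F] g)).det)⁻¹ = 1 ∧
    (∀ τ : Equiv.Perm (Fin n),
      (φ (∑ i, e (τ i) * ((1 : L) ⊗ₜ[F] g) * e i)).det * ((φ ((1 : L) ⊗ₜ[F] g)).det)⁻¹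
        = (φ (∑ i, e (τ i) * (1 : L ⊗[F] B) * e i)).det
            * ((φ (1 : L ⊗[F] B)).det)⁻¹) := by
  set M : Matrix (Fin n) (Fin n) L := φ ((1 : L) ⊗ₜ[F] g) with hM
  -- general image formula
  have key : ∀ (π : Equiv.Perm (Fin n)) (x : L ⊗[F] B),
      φ (∑ i, e (π i) * x * e i)
        = ∑ i, (φ x) (π i) i • Matrix.single (π i) i (1:L) := by
    intro π x
    rw [map_sum]
    refine Finset.sum_congr rfl fun i _ => ?_
    rw [map_mul, map_mul, he, he, aux_stdBasis_sandwich]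
  have hdet : ∀ (π : Equiv.Perm (Fin n)) (x : L ⊗[F] B),
      (φ (∑ i, e (π i) * x * e i)).det
        = ((Equiv.Perm.sign π : ℤ) : L) * ∏ i, (φ x) (π i) i := by
    intro π x
    rw [key, aux_det_perm_pattern]
  -- the sign is a nonzero scalar
  have hsign : ∀ π : Equiv.Perm (Fin n), ((Equiv.Perm.sign π : ℤ) : L) ≠ 0 := by
    intro π
    rcases Int.units_eq_one_or (Equiv.Perm.sign π) with h | h <;> simp [h]
  -- from hzero, the product over σ vanishes
  have hXσ : (φ (∑ i, e (σ i) * ((1 : L) ⊗ₜ[F] g) * e i)).det = 0 := by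
    rcases mul_eq_zero.mp hzero with h | h
    · exact h
    · exact absurd h (inv_ne_zero hg)
  have hprodσ : ∏ i, M (σ i) i = 0 := by
    rw [hdet σ, ← hM] at hXσ
    exact (mul_eq_zero.mp hXσ).resolve_left (hsign σ)
  obtain ⟨i0, -, hi0⟩ := Finset.prod_eq_zero_iff.mp hprodσ
  -- all off-diagonal entries of M vanish
  have hoff : ∀ c d : Fin n, c ≠ d → M c d = 0 := by
    intro c d hcd
    obtain ⟨τ, hτ1, hτ2⟩ := h2trans (σ i0) i0 c d (hσfix i0) hcd
    have hz : e (σ i0) * ((1 : L) ⊗ₜ[F] g) * e i0 = 0 := by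
      apply φ.injective
      rw [map_mul, map_mul, he, he, aux_stdBasis_sandwich, ← hM, hi0, zero_smul, map_zero]
    have hz2 := congrArg (Algebra.TensorProduct.map τ.toAlgHom (AlgHom.id F B)) hz
    rw [map_mul, map_mul, hequiv, hequiv, hτ1, hτ2, map_zero] at hz2
    have htg : Algebra.TensorProduct.map τ.toAlgHom (AlgHom.id F B) ((1 : L) ⊗ₜ[F] g)
        = (1 : L) ⊗ₜ[F] g := by
      rw [Algebra.TensorProduct.map_tmul]; simp
    rw [htg] at hz2
    have hz3 := congrArg φ hz2
    rw [map_mul, map_mul, he, he, aux_stdBasis_sandwich, map_zero, ← hM] at hz3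
    have := congrFun (congrFun hz3 c) d
    simpa [Matrix.single] using this
  -- part 1
  have P1 : ∀ τ : Equiv.Perm (Fin n), τ ≠ 1 →
      (φ (∑ i, e (τ i) * ((1 : L) ⊗ₜ[F] g) * e i)).det
        * ((φ ((1 : L) ⊗ₜ[F] g)).det)⁻¹ = 0 := by
    intro τ hτ
    obtain ⟨j, hj⟩ : ∃ j, τ j ≠ j := by
      by_contra h
      push_neg at h
      exact hτ (Equiv.ext h)
    have hp : ∏ i, M (τ i) i = 0 :=
      Finset.prod_eq_zero (Finset.mem_univ j) (hoff (τ j) j hj)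
    rw [hdet τ, ← hM, hp, mul_zero, zero_mul]
  -- M is diagonal
  have hMdiag : M = Matrix.diagonal (fun i => M i i) := by
    ext c d
    rcases eq_or_ne c d with rfl | h
    · simp [Matrix.diagonal]
    · simp [Matrix.diagonal, h, hoff c d h]
  have P2 : (φ (∑ i, e i * ((1 : L) ⊗ₜ[F] g) * e i)).det
      * ((φ ((1 : L) ⊗ₜ[F] g)).det)⁻¹ = 1 := by
    have h1 := hdet 1 ((1 : L) ⊗ₜ[F] g)
    simp only [Equiv.Perm.one_apply] at h1
    rw [h1, ← hM]
    have hdetM : M.det = ∏ i, M i i := by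
      conv_lhs => rw [hMdiag]
      rw [Matrix.det_diagonal]
    simp only [map_one, Units.val_one, Int.cast_one, one_mul, ← hdetM]
    exact mul_inv_cancel₀ hg
  refine ⟨P1, P2, ?_⟩
  intro τ
  rcases eq_or_ne τ 1 with rfl | hτ
  · have hR : (φ (∑ i, e ((1 : Equiv.Perm (Fin n)) i) * (1 : L ⊗[F] B) * e i)).det
        * ((φ (1 : L ⊗[F] B)).det)⁻¹ = 1 := by
      rw [hdet 1 1, map_one]
      simp [Matrix.det_one]
    rw [hR]
    simpa only [Equiv.Perm.one_apply] using P2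
  · rw [P1 τ hτ, hdet τ 1, map_one]
    obtain ⟨j, hj⟩ : ∃ j, τ j ≠ j := by
      by_contra h
      push_neg at h
      exact hτ (Equiv.ext h)
    have hp : ∏ i, (1 : Matrix (Fin n) (Fin n) L) (τ i) i = 0 :=
      Finset.prod_eq_zero (Finset.mem_univ j) (Matrix.one_apply_ne hj)
    rw [hp, mul_zero, zero_mul]
end

section
/- Let q_T be a rational binary quadratic form of discriminant 1 corresponding to a rational maximal torus T ≤ PGL₂. Then for every δ ∈ GL₂(ℂ), (det δ)⁻¹·⟨q_T, δ·q_T⟩_disc = Ψ^T_{+1}(δ) − Ψ^T_{−1}(δ), where ⟨·,·⟩_disc is the polarization of the discriminant form and Ψ^T_{±1} are the two canonical generators of the double quotient T\\PGL₂/T. -/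
/-- A binary quadratic form `a x² + b x y + c y²` encoded as the triple `(a, b, c)`. -/
abbrev BQF := ℂ × ℂ × ℂ

/-- The discriminant inner product: the polarization of the discriminant form,
`⟨ax²+bxy+cy², a'x²+b'xy+c'y²⟩ = bb' − 2ac' − 2a'c`. -/
def discPair (q q' : BQF) : ℂ :=
  q.2.1 * q'.2.1 - 2 * q.1 * q'.2.2 - 2 * q'.1 * q.2.2

/-- The (unnormalized) substitution action: `(substBQF M q)(x,y) = q((x,y)·M)`. -/
def substBQF (M : Matrix (Fin 2) (Fin 2) ℂ) (q : BQF) : BQF :=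
  (q.1 * M 0 0 ^ 2 + q.2.1 * M 0 0 * M 0 1 + q.2.2 * M 0 1 ^ 2,
   2 * q.1 * M 0 0 * M 1 0 + q.2.1 * (M 0 0 * M 1 1 + M 0 1 * M 1 0)
     + 2 * q.2.2 * M 0 1 * M 1 1,
   q.1 * M 1 0 ^ 2 + q.2.1 * M 1 0 * M 1 1 + q.2.2 * M 1 1 ^ 2)

/-- The `PGL₂`-action on binary quadratic forms: `g·q(x,y) = (det g)⁻¹ q((x,y)·g)`. -/
noncomputable def actBQF (M : Matrix (Fin 2) (Fin 2) ℂ) (q : BQF) : BQF :=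
  (M.det)⁻¹ • substBQF M q

/-- The canonical generator `Ψ_{+1}` of the double quotient `PA\PGL₂/PA`. -/
noncomputable def PsiPlus (M : Matrix (Fin 2) (Fin 2) ℂ) : ℂ := M 0 0 * M 1 1 / M.det

/-- The canonical generator `Ψ_{−1}` of the double quotient `PA\PGL₂/PA`. -/
noncomputable def PsiMinus (M : Matrix (Fin 2) (Fin 2) ℂ) : ℂ := -(M 0 1 * M 1 0) / M.det

/-- The form `q₀(x,y) = xy` of discriminant `1` corresponding to the diagonal torus. -/
def q0 : BQF := (0, 1, 0)

lemma substBQF_smul (M : Matrix (Fin 2) (Fin 2) ℂ) (t : ℂ) (q : BQF) :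
    substBQF M (t • q) = t • substBQF M q := by
  simp only [substBQF, Prod.smul_def, smul_eq_mul, Prod.mk.injEq]
  refine ⟨by ring, by ring, by ring⟩

lemma discPair_smul_smul (t u : ℂ) (q q' : BQF) :
    discPair (t • q) (u • q') = t * u * discPair q q' := by
  simp only [discPair, Prod.smul_def, smul_eq_mul]
  ring

/-- Let `T = g·PA·g⁻¹` be a maximal torus of `PGL₂` and `q_T = ±g·q₀` the binary quadratic
form of discriminant `1` corresponding to `T`.  Then for every `δ ∈ GL₂(ℂ)`,
`(det δ)⁻¹·⟨q_T, δ.q_T⟩_disc = Ψ^T_{+1}(δ) − Ψ^T_{−1}(δ)`, where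
`Ψ^T_{±1} = Ψ_{±1} ∘ Ad(g⁻¹)`. -/
theorem discPair_eq_PsiPlus_sub_PsiMinus (g δ : Matrix (Fin 2) (Fin 2) ℂ)
    (hgdet : g.det ≠ 0) (hδdet : δ.det ≠ 0) (qT : BQF)
    (hqT : qT = actBQF g q0 ∨ qT = (-1 : ℂ) • actBQF g q0) :
    (δ.det)⁻¹ * discPair qT (substBQF δ qT)
      = PsiPlus (g⁻¹ * δ * g) - PsiMinus (g⁻¹ * δ * g) := by
  obtain ⟨a, b, c, d, rfl⟩ : ∃ a b c d, g = !![a, b; c, d] :=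
    ⟨_, _, _, _, (Matrix.eta_fin_two g)⟩
  obtain ⟨p, q, r, s, rfl⟩ : ∃ p q r s, δ = !![p, q; r, s] :=
    ⟨_, _, _, _, (Matrix.eta_fin_two δ)⟩
  rw [Matrix.det_fin_two_of] at hgdet hδdet
  set e : ℂ := a * d - b * c with he
  set f : ℂ := p * s - q * r with hf
  set w : BQF := substBQF !![a, b; c, d] q0 with hw
  set N : Matrix (Fin 2) (Fin 2) ℂ := !![d, -b; -c, a] * !![p, q; r, s] * !![a, b; c, d]
    with hN
  have hginv : (!![a, b; c, d])⁻¹ = e⁻¹ • !![d, -b; -c, a] := by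
    rw [Matrix.inv_def, Matrix.adjugate_fin_two_of, Matrix.det_fin_two_of,
      Ring.inverse_eq_inv', ← he]
  have hM : !![a, b; c, d]⁻¹ * !![p, q; r, s] * !![a, b; c, d] = e⁻¹ • N := by
    rw [hginv, Matrix.smul_mul, Matrix.smul_mul, hN]
  have hdet : (e⁻¹ • N).det = f := by
    rw [← hM, Matrix.det_mul, Matrix.det_mul, hginv, Matrix.det_smul,
      Matrix.det_fin_two_of, Matrix.det_fin_two_of, Matrix.det_fin_two_of]
    have hg' : a * d - b * c ≠ 0 := hgdet
    simp only [Fintype.card_fin, he, hf]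
    field_simp
  have hact : actBQF !![a, b; c, d] q0 = e⁻¹ • w := by
    rw [actBQF, Matrix.det_fin_two_of, ← he, hw]
  have key : discPair w (substBQF !![p, q; r, s] w) = N 0 0 * N 1 1 + N 0 1 * N 1 0 := by
    simp only [hw, hN, substBQF, q0, discPair, Matrix.mul_fin_two, Matrix.of_apply,
      Matrix.cons_val', Matrix.cons_val_zero, Matrix.cons_val_one, Matrix.head_cons,
      Matrix.empty_val', Matrix.cons_val_fin_one, Matrix.head_fin_const]
    ring
  rw [hM, Matrix.det_fin_two_of, ← hf, PsiPlus, PsiMinus, hdet]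
  have hq : qT = e⁻¹ • w ∨ qT = (-e⁻¹) • w := by
    rcases hqT with h | h
    · exact Or.inl (h.trans hact)
    · refine Or.inr (h.trans ?_)
      rw [hact, smul_smul]; ring_nf
  clear_value e f N
  clear hqT hginv hM hact hw hN
  rcases hq with h | h <;> subst h <;>
  · rw [substBQF_smul, discPair_smul_smul, key]
    simp only [Matrix.smul_apply, smul_eq_mul]
    field_simp
    ring
end

section
/- For the diagonal torus PA in PGL₂, the canonical generators satisfy Ψ_{+1} + Ψ_{−1} = 1 on all of PGL₂, where Ψ_{+1}([[a,b],[c,d]]) = ad/(ad−bc) and Ψ_{−1}([[a,b],[c,d]]) = −bc/(ad−bc); consequently, the ring of regular functions on PGL₂ invariant under both the left and right PA-action is the polynomial ring generated by Ψ_{+1} alone. -/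
open MvPolynomial

section Aux

private lemma mv_eval_bind₁ {F : Type*} [CommSemiring F] {σ τ : Type*}
    (x : τ → F) (g : σ → MvPolynomial τ F) (P : MvPolynomial σ F) :
    eval x (bind₁ g P) = eval (fun i => eval x (g i)) P :=
  eval₂Hom_bind₁ _ _ _ _

private lemma mv_eq_of_eval_eq_on {F : Type*} [Field F] [CharZero F] {σ : Type*}
    (p q d : MvPolynomial σ F) (hd : d ≠ 0)
    (h : ∀ x : σ → F, eval x d ≠ 0 → eval x p = eval x q) : p = q := by
  have h0 : d * (p - q) = 0 := by
    apply MvPolynomial.funext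
    intro x
    rw [map_mul, map_sub, map_zero]
    by_cases hx : eval x d = 0
    · rw [hx, zero_mul]
    · rw [h x hx, sub_self, mul_zero]
  rcases mul_eq_zero.mp h0 with h1 | h1
  · exact absurd h1 hd
  · exact sub_eq_zero.mp h1

private lemma upgrade {F : Type*} [Field F] [CharZero F] (k : ℕ)
    (P : MvPolynomial (Fin 2 × Fin 2) F) (c : Fin 2 × Fin 2 → Bool)
    (h : ∀ (s : F) (v : Fin 2 × Fin 2 → F), s ≠ 0 →
      v (0,0) * v (1,1) - v (0,1) * v (1,0) ≠ 0 →
      eval (fun q => (if c q then s else 1) * v q) P = s ^ k * eval v P) :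
    ∀ (s : F) (v : Fin 2 × Fin 2 → F),
      eval (fun q => (if c q then s else 1) * v q) P = s ^ k * eval v P := by
  set τ := Option (Fin 2 × Fin 2)
  set p1 : MvPolynomial τ F :=
    bind₁ (fun q : Fin 2 × Fin 2 => (if c q then X none else 1) * X (some q)) P with hp1
  set p2 : MvPolynomial τ F := X none ^ k * rename some P with hp2
  set d : MvPolynomial τ F :=
    X none * (X (some (0,0)) * X (some (1,1)) - X (some (0,1)) * X (some (1,0))) with hdd
  have e1 : ∀ x : τ → F,
      eval x p1 = eval (fun q => (if c q then x none else 1) * x (some q)) P := by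
    intro x
    have hfun : (fun q : Fin 2 × Fin 2 =>
        eval x ((if c q then (X none : MvPolynomial τ F) else 1) * X (some q)))
        = fun q => (if c q then x none else 1) * x (some q) := by
      funext q; by_cases hq : c q <;> simp [hq]
    rw [hp1, mv_eval_bind₁, hfun]
  have e2 : ∀ x : τ → F, eval x p2 = (x none) ^ k * eval (fun q => x (some q)) P := by
    intro x
    rw [hp2, map_mul, map_pow, eval_X, eval_rename]
    rfl
  have ed : ∀ x : τ → F,
      eval x d = x none * (x (some (0,0)) * x (some (1,1)) - x (some (0,1)) * x (some (1,0))) := by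
    intro x; rw [hdd]; simp
  have hd : d ≠ 0 := fun h0 => by
    have h1 := congrArg
      (eval (fun o : τ => o.elim 1 (fun q => if q.1 = q.2 then (1:F) else 0))) h0
    rw [ed, map_zero] at h1
    simp only [Option.elim_none, Option.elim_some] at h1
    rw [if_neg (by decide : ¬((0:Fin 2) = 1)), if_neg (by decide : ¬((1:Fin 2) = 0))] at h1
    norm_num at h1
  have hpq : p1 = p2 := by
    apply mv_eq_of_eval_eq_on _ _ d hd
    intro x hx
    rw [ed] at hx
    rw [e1, e2]
    exact h (x none) (fun q => x (some q)) (left_ne_zero_of_mul hx)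
      (right_ne_zero_of_mul hx)
  intro s v
  have h2 := congrArg (eval (fun o : τ => o.elim s v)) hpq
  rw [e1, e2] at h2
  exact h2

variable {F : Type*} [Field F] [CharZero F]

private def Hinv (k : ℕ) (P : MvPolynomial (Fin 2 × Fin 2) F) : Prop :=
  ∀ A : Matrix (Fin 2) (Fin 2) F, A.det ≠ 0 → ∀ lam mu : Fin 2 → F,
    (∀ i, lam i ≠ 0) → (∀ j, mu j ≠ 0) →
    eval (fun q : Fin 2 × Fin 2 => lam q.1 * A q.1 q.2 * (mu q.2)⁻¹) P
        / (Matrix.of fun i j : Fin 2 => lam i * A i j * (mu j)⁻¹).det ^ k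
      = eval (fun q : Fin 2 × Fin 2 => A q.1 q.2) P / A.det ^ k

private lemma row_scale (k : ℕ) (P : MvPolynomial (Fin 2 × Fin 2) F)
    (hinv : Hinv k P) (i : Fin 2) (s : F) (v : Fin 2 × Fin 2 → F) :
    eval (fun q => (if q.1 = i then s else 1) * v q) P = s ^ k * eval v P := by
  have key : ∀ (s : F) (v : Fin 2 × Fin 2 → F), s ≠ 0 →
      v (0,0) * v (1,1) - v (0,1) * v (1,0) ≠ 0 →
      eval (fun q => (if q.1 = i then s else 1) * v q) P = s ^ k * eval v P := by
    intro s v hs hD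
    set A : Matrix (Fin 2) (Fin 2) F := Matrix.of fun a b => v (a,b) with hA
    have hdet : A.det = v (0,0) * v (1,1) - v (0,1) * v (1,0) := by
      rw [Matrix.det_fin_two]; rfl
    have hAd : A.det ≠ 0 := by rw [hdet]; exact hD
    set lam : Fin 2 → F := fun i' => if i' = i then s else 1 with hlam
    have hlamne : ∀ i', lam i' ≠ 0 := by
      intro i'; rw [hlam]; dsimp only; split <;> simp [hs]
    have h1 := hinv A hAd lam (fun _ => 1) hlamne (fun _ => one_ne_zero)
    simp only [inv_one, mul_one] at h1
    have hlam01 : lam 0 * lam 1 = s := by rw [hlam]; fin_cases i <;> simp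
    have hsc : (Matrix.of fun a b : Fin 2 => lam a * A a b).det = s * A.det := by
      rw [Matrix.det_fin_two, hdet]
      show lam 0 * v (0,0) * (lam 1 * v (1,1)) - lam 0 * v (0,1) * (lam 1 * v (1,0)) = _
      linear_combination (v (0,0) * v (1,1) - v (0,1) * v (1,0)) * hlam01
    rw [hsc, div_eq_div_iff (pow_ne_zero k (mul_ne_zero hs hAd)) (pow_ne_zero k hAd)] at h1
    show eval (fun q => lam q.1 * A q.1 q.2) P = s ^ k * eval (fun q => A q.1 q.2) P
    apply mul_right_cancel₀ (pow_ne_zero k hAd)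
    rw [h1, mul_pow]; ring
  have up := upgrade k P (fun q => decide (q.1 = i)) (by
    intro s v hs hD
    simpa only [decide_eq_true_eq] using key s v hs hD)
  simpa only [decide_eq_true_eq] using up s v

private lemma col_scale (k : ℕ) (P : MvPolynomial (Fin 2 × Fin 2) F)
    (hinv : Hinv k P) (i : Fin 2) (s : F) (v : Fin 2 × Fin 2 → F) :
    eval (fun q => (if q.2 = i then s else 1) * v q) P = s ^ k * eval v P := by
  have key : ∀ (s : F) (v : Fin 2 × Fin 2 → F), s ≠ 0 →
      v (0,0) * v (1,1) - v (0,1) * v (1,0) ≠ 0 →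
      eval (fun q => (if q.2 = i then s else 1) * v q) P = s ^ k * eval v P := by
    intro s v hs hD
    set A : Matrix (Fin 2) (Fin 2) F := Matrix.of fun a b => v (a,b) with hA
    have hdet : A.det = v (0,0) * v (1,1) - v (0,1) * v (1,0) := by
      rw [Matrix.det_fin_two]; rfl
    have hAd : A.det ≠ 0 := by rw [hdet]; exact hD
    set mu : Fin 2 → F := fun j' => if j' = i then s⁻¹ else 1 with hmu
    have hmune : ∀ j', mu j' ≠ 0 := by
      intro j'; rw [hmu]; dsimp only; split <;> simp [hs]
    have h1 := hinv A hAd (fun _ => 1) mu (fun _ => one_ne_zero) hmune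
    simp only [one_mul] at h1
    have hmuinv : ∀ j', (mu j')⁻¹ = if j' = i then s else 1 := by
      intro j'; rw [hmu]; dsimp only; split <;> simp
    have hmu01 : (mu 0)⁻¹ * (mu 1)⁻¹ = s := by
      rw [hmuinv, hmuinv]; fin_cases i <;> simp
    have hsc : (Matrix.of fun a b : Fin 2 => A a b * (mu b)⁻¹).det = s * A.det := by
      rw [Matrix.det_fin_two, hdet]
      show v (0,0) * (mu 0)⁻¹ * (v (1,1) * (mu 1)⁻¹)
          - v (0,1) * (mu 1)⁻¹ * (v (1,0) * (mu 0)⁻¹) = _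
      linear_combination (v (0,0) * v (1,1) - v (0,1) * v (1,0)) * hmu01
    rw [hsc, div_eq_div_iff (pow_ne_zero k (mul_ne_zero hs hAd)) (pow_ne_zero k hAd)] at h1
    have hfun : (fun q : Fin 2 × Fin 2 => (if q.2 = i then s else 1) * v q)
        = fun q => A q.1 q.2 * (mu q.2)⁻¹ := by
      funext q; rw [hmuinv, mul_comm]; rfl
    rw [hfun]
    apply mul_right_cancel₀ (pow_ne_zero k hAd)
    rw [h1, mul_pow]
    have hv : (fun q : Fin 2 × Fin 2 => A q.1 q.2) = v := rfl
    rw [hv]; ring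
  have up := upgrade k P (fun q => decide (q.2 = i)) (by
    intro s v hs hD
    simpa only [decide_eq_true_eq] using key s v hs hD)
  simpa only [decide_eq_true_eq] using up s v

private noncomputable def gsub : Fin 2 × Fin 2 → MvPolynomial (Fin 2 × Fin 2) F := fun q =>
  if q = (0,0) then X (0,0) * X (1,1) else if q = (0,1) then X (0,1) * X (1,0) else 1

private lemma reduction (k : ℕ) (P : MvPolynomial (Fin 2 × Fin 2) F) (hinv : Hinv k P) :
    ∀ v : Fin 2 × Fin 2 → F,
      eval v P = eval (fun q => eval v (gsub q)) P := by
  have chain : ∀ v : Fin 2 × Fin 2 → F,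
      (v (1,0) * v (1,1)) ^ k * eval v P
        = (v (1,0) * v (1,1)) ^ k * eval (fun q => eval v (gsub q)) P := by
    intro v
    set w : Fin 2 × Fin 2 → F := fun q => eval v (gsub q) with hw
    have hw' : ∀ q, w q = if q = (0,0) then v (0,0) * v (1,1)
        else if q = (0,1) then v (0,1) * v (1,0) else 1 := by
      intro q
      rw [hw]; dsimp only [gsub]
      split
      · simp
      · split <;> simp
    have h1 := col_scale k P hinv 0 (v (1,1)) v
    set v1 : Fin 2 × Fin 2 → F := fun q => (if q.2 = 0 then v (1,1) else 1) * v q with hv1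
    have h2 := col_scale k P hinv 1 (v (1,0)) v1
    have h3 := row_scale k P hinv 1 (v (1,0) * v (1,1)) w
    have hfun : (fun q : Fin 2 × Fin 2 => (if q.2 = 1 then v (1,0) else 1) * v1 q)
        = fun q => (if q.1 = 1 then v (1,0) * v (1,1) else 1) * w q := by
      funext q
      rcases q with ⟨a, b⟩
      fin_cases a <;> fin_cases b <;>
        simp only [hv1, hw'] <;> norm_num [Prod.ext_iff, Fin.ext_iff] <;> ring
    rw [hfun, h3, h1] at h2
    rw [h2, mul_pow]
    ring
  intro v
  have hPeq : P = bind₁ (gsub (F := F)) P := by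
    apply mv_eq_of_eval_eq_on _ _ (X (1,0) * X (1,1)) (by
      intro h0
      have h1 := congrArg (eval (fun _ : Fin 2 × Fin 2 => (1:F))) h0
      simp at h1)
    intro x hx
    rw [mv_eval_bind₁]
    have hx' : x (1,0) * x (1,1) ≠ 0 := by simpa using hx
    exact mul_left_cancel₀ (pow_ne_zero k hx') (chain x)
  conv_lhs => rw [hPeq, mv_eval_bind₁]

private noncomputable def gQ : Fin 2 × Fin 2 → Polynomial F := fun q =>
  if q = (0,0) then Polynomial.X else if q = (0,1) then Polynomial.X - 1 else 1

private lemma polyeval (x : F) (g : Fin 2 × Fin 2 → Polynomial F)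
    (P : MvPolynomial (Fin 2 × Fin 2) F) :
    (MvPolynomial.aeval g P).eval x = eval (fun q => (g q).eval x) P := by
  have h := MvPolynomial.comp_aeval_apply (f := g) (Polynomial.aeval x : Polynomial F →ₐ[F] F) P
  simpa [Polynomial.coe_aeval_eq_eval, MvPolynomial.coe_aeval_eq_eval] using h

private lemma part2 (k : ℕ) (P : MvPolynomial (Fin 2 × Fin 2) F) (hinv : Hinv k P) :
    ∃ Q : Polynomial F, ∀ A : Matrix (Fin 2) (Fin 2) F, A.det ≠ 0 →
      eval (fun q : Fin 2 × Fin 2 => A q.1 q.2) P / A.det ^ k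
        = Q.eval (A 0 0 * A 1 1 / A.det) := by
  refine ⟨MvPolynomial.aeval gQ P, ?_⟩
  intro A hA
  set D := A.det with hD
  set a := A 0 0
  set b := A 0 1
  set c := A 1 0
  set d := A 1 1
  set x := a * d / D with hx
  have hbc : b * c = a * d - D := by rw [hD, Matrix.det_fin_two]; ring
  set v : Fin 2 × Fin 2 → F := fun q => A q.1 q.2 with hv
  have hred := reduction k P hinv v
  set w : Fin 2 × Fin 2 → F := fun q => eval v (gsub q) with hw
  have hw' : ∀ q, w q = if q = (0,0) then a * d
      else if q = (0,1) then a * d - D else 1 := by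
    intro q
    rw [hw]; dsimp only [gsub]
    split
    · simp [hv]; rfl
    · split
      · simpa [hv] using hbc
      · simp
  have h2 := row_scale k P hinv 0 D⁻¹ w
  have hfun2 : (fun q : Fin 2 × Fin 2 => (if q.1 = 0 then D⁻¹ else 1) * w q)
      = fun q => (gQ q).eval x := by
    funext q
    rcases q with ⟨i, j⟩
    fin_cases i <;> fin_cases j <;>
      rw [hw'] <;> dsimp only [gQ] <;>
      norm_num [Prod.ext_iff, Fin.ext_iff] <;>
      field_simp [hx] <;> rw [hx] <;> field_simp <;> ring
  rw [polyeval, ← hfun2, h2, hred, inv_pow]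
  rw [div_eq_inv_mul]

end Aux

/-- For the diagonal torus `PA` in `PGL₂`, the canonical generators
`Ψ_{+1}(A) = a d/(a d − b c)` and `Ψ_{−1}(A) = −b c/(a d − b c)` satisfy
`Ψ_{+1} + Ψ_{−1} = 1`; consequently, every regular function on `PGL₂`
(a degree-`0` element `P/detᵏ` with `P` homogeneous of degree `2k`) which is invariant
under both the left and the right `PA`-action is a polynomial in `Ψ_{+1}` alone, and
`Ψ_{+1}` satisfies no polynomial relation: the invariant ring is the polynomial ring
generated by `Ψ_{+1}`. -/
theorem pgl2_invariants_eq_polynomials_in_PsiPlus {F : Type*} [Field F] [CharZero F] :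
    (∀ A : Matrix (Fin 2) (Fin 2) F, A.det ≠ 0 →
      A 0 0 * A 1 1 / A.det + -(A 0 1 * A 1 0) / A.det = 1) ∧
    (∀ (k : ℕ) (P : MvPolynomial (Fin 2 × Fin 2) F), P.IsHomogeneous (2 * k) →
      (∀ A : Matrix (Fin 2) (Fin 2) F, A.det ≠ 0 → ∀ lam mu : Fin 2 → F,
        (∀ i, lam i ≠ 0) → (∀ j, mu j ≠ 0) →
        eval (fun q : Fin 2 × Fin 2 => lam q.1 * A q.1 q.2 * (mu q.2)⁻¹) P
            / (Matrix.of fun i j : Fin 2 => lam i * A i j * (mu j)⁻¹).det ^ k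
          = eval (fun q : Fin 2 × Fin 2 => A q.1 q.2) P / A.det ^ k) →
      ∃ Q : Polynomial F, ∀ A : Matrix (Fin 2) (Fin 2) F, A.det ≠ 0 →
        eval (fun q : Fin 2 × Fin 2 => A q.1 q.2) P / A.det ^ k
          = Q.eval (A 0 0 * A 1 1 / A.det)) ∧
    (∀ Q : Polynomial F,
      (∀ A : Matrix (Fin 2) (Fin 2) F, A.det ≠ 0 → Q.eval (A 0 0 * A 1 1 / A.det) = 0) →
      Q = 0) := by
  refine ⟨?_, ?_, ?_⟩
  · intro A hA
    rw [← add_div, div_eq_one_iff_eq hA, Matrix.det_fin_two]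
    ring
  · intro k P _ hinv
    exact part2 k P hinv
  · intro Q hQ
    apply Polynomial.funext
    intro t
    have hA : (Matrix.of ![![t, t - 1], ![(1:F), 1]]).det ≠ 0 := by
      rw [Matrix.det_fin_two_of]; ring_nf; norm_num
    have h := hQ (Matrix.of ![![t, t - 1], ![(1:F), 1]]) hA
    have hdet : (Matrix.of ![![t, t - 1], ![(1:F), 1]]).det = 1 := by
      rw [Matrix.det_fin_two_of]; ring
    simp only [hdet] at h
    simpa using h
end
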